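/- For any nonempty diagram of the form D_{XY} arising from a shifted skew diagram D, and any subsets X' ⊆ X and Y' ⊆ Y, one has rect(D_{X'Y'}) ≤ rect(D_{XY}). -/

import Mathlib

open scoped Classical

noncomputable section

namespace SkewDiag

/-- A shifted skew diagram `D = λ/μ`, where `λ, μ` are strict partitions
(strictly decreasing while positive) with `μ ⊆ λ`.  Rows are indexed by `1, 2, …`. -/
structure ShiftedSkew where
  lam : ℕ → ℕ
  mu : ℕ → ℕ
  lam_strict : ∀ i, 1 ≤ i → 0 < lam (i + 1) → lam (i + 1) < lam i
  mu_strict : ∀ i, 1 ≤ i → 0 < mu (i + 1) → mu (i + 1) < mu i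
  mu_le : ∀ i, mu i ≤ lam i

/-- The cell `(i,j)` of the shifted plane belongs to `λ/μ`:  row `i ≥ 1` occupies
columns `i + μ_i + 1, …, i + λ_i`. -/
def ShiftedSkew.HasCell (D : ShiftedSkew) (c : ℕ × ℕ) : Prop :=
  1 ≤ c.1 ∧ c.1 + D.mu c.1 < c.2 ∧ c.2 ≤ c.1 + D.lam c.1

/-- The restriction `D_{XY}` of the diagram `D` to the rows indexed by `X` and the
columns indexed by `Y`. -/
def restrictD (D : ShiftedSkew) (Xs Ys : Finset ℕ) : Finset (ℕ × ℕ) :=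
  (Xs ×ˢ Ys).filter fun c => D.HasCell c

/-- The pieces produced by the rectangular decomposition algorithm: empty rectangles,
full rectangles, and pedestals (each recorded with its sets of rows and columns). -/
inductive Piece where
  | emptyR : Finset ℕ → Finset ℕ → Piece
  | fullR : Finset ℕ → Finset ℕ → Piece
  | ped : Finset ℕ → Finset ℕ → Piece
deriving DecidableEq

/-- One pass of the rectangular decomposition algorithm on the diagram with cells
`cells`, rows `Xs` and columns `Ys` (with enough `fuel` this computes the full
rectangular decomposition together with the set of excess cells). -/
def decompAux (cells : Finset (ℕ × ℕ)) : ℕ → Finset ℕ → Finset ℕ → List Piece × Finset (ℕ × ℕ)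
  | 0, _, _ => ([], ∅)
  | fuel + 1, Xs, Ys =>
    if Xs = ∅ ∧ Ys = ∅ then ([], ∅)
    else
      -- the position of the would-be top cell
      let x1 := Xs.min.untopD 0
      let yn := Ys.max.unbotD 0
      if (x1, yn) ∈ cells then
        -- Case 2: there is a top cell
        let m' := ((Xs.filter fun x => (x, yn) ∈ cells).max).unbotD 0
        let n' := ((Ys.filter fun y => (x1, y) ∈ cells).min).untopD 0
        let X' := Xs.filter (· ≤ m')
        let Y' := Ys.filter (n' ≤ ·)
        let ex := cells.filter fun c =>
          (c.1 ∈ Xs \ X' ∧ c.2 ∈ Y') ∨ (c.1 ∈ X' ∧ c.2 ∈ Ys \ Y')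
        if (m', n') ∈ cells then
          -- Subcase 2a: there is a neck cell; record a full rectangle
          let r := decompAux cells fuel (Xs \ X') (Ys \ Y')
          (Piece.fullR X' Y' :: r.1, ex ∪ r.2)
        else
          -- Subcase 2b: no neck cell; record the pedestal and stop
          ([Piece.ped X' Y'], ex)
      else
        -- Case 1: no top cell; record an empty rectangle
        let X' := Xs.filter fun x => ∀ x'' ∈ Xs, x'' ≤ x → ∀ y ∈ Ys, (x'', y) ∉ cells
        let Y' := Ys.filter fun y => ∀ y'' ∈ Ys, y ≤ y'' → ∀ x ∈ Xs, (x, y'') ∉ cells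
        let r := decompAux cells fuel (Xs \ X') (Ys \ Y')
        (Piece.emptyR X' Y' :: r.1, r.2)

/-- The list of pieces of the rectangular decomposition of the diagram with cells
`cells`, rows `Xs` and columns `Ys`. -/
def pieces (cells : Finset (ℕ × ℕ)) (Xs Ys : Finset ℕ) : List Piece :=
  (decompAux cells (Xs.card + Ys.card + 1) Xs Ys).1

/-- The set of excess cells produced by the rectangular decomposition. -/
def excessCells (cells : Finset (ℕ × ℕ)) (Xs Ys : Finset ℕ) : Finset (ℕ × ℕ) :=
  (decompAux cells (Xs.card + Ys.card + 1) Xs Ys).2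

/-- The rectangularity: the number of full rectangles and pedestals in the
rectangular decomposition. -/
def rectNum (cells : Finset (ℕ × ℕ)) (Xs Ys : Finset ℕ) : ℕ :=
  (pieces cells Xs Ys).countP fun p =>
    match p with
    | Piece.fullR _ _ => true
    | Piece.ped _ _ => true
    | Piece.emptyR _ _ => false

/-- A diagram is spherical if its rectangular decomposition consists of full rectangles
only (and possibly excess cells): no empty rectangles and no pedestal. -/
def IsSpherical (cells : Finset (ℕ × ℕ)) (Xs Ys : Finset ℕ) : Prop :=
  ∀ p ∈ pieces cells Xs Ys, ∃ A B, p = Piece.fullR A B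

/-- The rectangular decomposition contains an empty rectangle. -/
def HasEmptyR (cells : Finset (ℕ × ℕ)) (Xs Ys : Finset ℕ) : Prop :=
  ∃ A B, Piece.emptyR A B ∈ pieces cells Xs Ys

/-- The rectangular decomposition contains a pedestal. -/
def HasPed (cells : Finset (ℕ × ℕ)) (Xs Ys : Finset ℕ) : Prop :=
  ∃ A B, Piece.ped A B ∈ pieces cells Xs Ys

/-- The staircase cells of the diagram `D_X`: cells `(x_i, x_{i+1})` in a pair of
consecutive rows/columns of `X`. -/
def staircase (cells : Finset (ℕ × ℕ)) (Xs : Finset ℕ) : Finset (ℕ × ℕ) :=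
  cells.filter fun c => c.1 ∈ Xs ∧ c.2 ∈ Xs ∧ c.1 < c.2 ∧ ∀ z ∈ Xs, z ≤ c.1 ∨ c.2 ≤ z

/-- The non-excess staircase cells of `D_X`. -/
def nonexcessStaircase (cells : Finset (ℕ × ℕ)) (Xs : Finset ℕ) : Finset (ℕ × ℕ) :=
  staircase cells Xs \ excessCells cells Xs Xs

/-- The bipartite graph `G^bip_{XY}(D)` on vertex set `X ⊔ Y`, with an edge `{x, y}`
for every cell `(x,y)` of `D_{XY}`. -/
def bipGraphS (D : ShiftedSkew) (Xs Ys : Finset ℕ) : SimpleGraph (↥Xs ⊕ ↥Ys) :=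
  SimpleGraph.fromRel fun a b =>
    ∃ (x : Xs) (y : Ys), D.HasCell ((x : ℕ), (y : ℕ)) ∧ a = Sum.inl x ∧ b = Sum.inr y

/-- The nonbipartite graph `G^nonbip_X(D)` on vertex set `X`, with an edge `{x, x'}`
for every cell `(x,x')` of `D_X`. -/
def nonbipGraphS (D : ShiftedSkew) (Xs : Finset ℕ) : SimpleGraph ↥Xs :=
  SimpleGraph.fromRel fun a b => D.HasCell ((a : ℕ), (b : ℕ))

/-- The geometric realization of the independence complex `Δ(G)` of the graph `G`:
the faces of `Δ(G)` are the subsets of the vertex set containing no edge of `G`. -/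
def indepRealization {V : Type} [Fintype V] (G : SimpleGraph V) : Set (V → ℝ) :=
  {f | (∀ v, 0 ≤ f v) ∧ (∑ v, f v) = 1 ∧ ∀ u v, G.Adj u v → f u = 0 ∨ f v = 0}


/-! ### Auxiliary machinery -/

/-- The counting predicate used by `rectNum`. -/
def cntP : Piece → Bool
  | Piece.fullR _ _ => true
  | Piece.ped _ _ => true
  | Piece.emptyR _ _ => false

def cntR (l : List Piece) : ℕ := l.countP cntP

lemma rectNum_eq (cells : Finset (ℕ × ℕ)) (Xs Ys : Finset ℕ) :
    rectNum cells Xs Ys = cntR (pieces cells Xs Ys) := rfl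

lemma decompAux_fst (cells : Finset (ℕ × ℕ)) (fuel : ℕ) (Xs Ys : Finset ℕ) :
    (decompAux cells (fuel + 1) Xs Ys).1 =
      if Xs = ∅ ∧ Ys = ∅ then []
      else
        let x1 := Xs.min.untopD 0
        let yn := Ys.max.unbotD 0
        if (x1, yn) ∈ cells then
          let m' := ((Xs.filter fun x => (x, yn) ∈ cells).max).unbotD 0
          let n' := ((Ys.filter fun y => (x1, y) ∈ cells).min).untopD 0
          let X' := Xs.filter (· ≤ m')
          let Y' := Ys.filter (n' ≤ ·)
          if (m', n') ∈ cells then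
            Piece.fullR X' Y' :: (decompAux cells fuel (Xs \ X') (Ys \ Y')).1
          else [Piece.ped X' Y']
        else
          let X' := Xs.filter fun x => ∀ x'' ∈ Xs, x'' ≤ x → ∀ y ∈ Ys, (x'', y) ∉ cells
          let Y' := Ys.filter fun y => ∀ y'' ∈ Ys, y ≤ y'' → ∀ x ∈ Xs, (x, y'') ∉ cells
          Piece.emptyR X' Y' :: (decompAux cells fuel (Xs \ X') (Ys \ Y')).1 := by
  rw [decompAux]
  split
  · rfl
  · dsimp only
    split_ifs <;> rfl

lemma untop'_min (s : Finset ℕ) (h : s.Nonempty) : s.min.untopD 0 = s.min' h := by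
  rw [← Finset.coe_min' h]; rfl

lemma unbot'_max (s : Finset ℕ) (h : s.Nonempty) : s.max.unbotD 0 = s.max' h := by
  rw [← Finset.coe_max' h]; rfl

lemma min_untop'_eq_zero (s : Finset ℕ) (h : s = ∅) : s.min.untopD 0 = 0 := by
  subst h; rfl

/-- If `f` is strictly decreasing while positive, then `i + f i` is
weakly decreasing (in the range where `f` is positive). -/
lemma addMono (f : ℕ → ℕ) (hf : ∀ i, 1 ≤ i → 0 < f (i + 1) → f (i + 1) < f i) :
    ∀ a b, 1 ≤ a → a ≤ b → 0 < f b → b + f b ≤ a + f a := by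
  intro a b ha hab
  induction b, hab using Nat.le_induction with
  | base => intro _; exact le_rfl
  | succ b hb IH =>
    intro hpos
    have h := hf b (ha.trans hb) hpos
    have h2 : b + f b ≤ a + f a := IH (by omega)
    omega

lemma hasCell_iff (D : ShiftedSkew) (x y : ℕ) :
    D.HasCell (x, y) ↔ 1 ≤ x ∧ x + D.mu x < y ∧ y ≤ x + D.lam x := Iff.rfl

/-- The full rectangle: every position between the corners is a cell. -/
lemma rectFull (D : ShiftedSkew) (x1 m' n' yn x y : ℕ)
    (h1 : D.HasCell (m', yn)) (h2 : D.HasCell (x1, n')) (h3 : D.HasCell (m', n'))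
    (hx1 : x1 ≤ x) (hxm : x ≤ m') (hny : n' ≤ y) (hyn : y ≤ yn) :
    D.HasCell (x, y) := by
  simp only [hasCell_iff] at *
  obtain ⟨hm1, hm2, hm3⟩ := h1
  obtain ⟨hx11, hx12, hx13⟩ := h2
  obtain ⟨-, hn2, hn3⟩ := h3
  have hlam : m' + D.lam m' ≤ x + D.lam x :=
    addMono D.lam D.lam_strict x m' (hx11.trans hx1) hxm (by omega)
  have hmu : x + D.mu x < y := by
    rcases Nat.eq_zero_or_pos (D.mu x) with h | h
    · omega
    · have := addMono D.mu D.mu_strict x1 x hx11 hx1 h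
      omega
  exact ⟨hx11.trans hx1, hmu, by omega⟩

/-- If row `x1` and column `yn` are both nonempty, the top cell is present. -/
lemma topCell (D : ShiftedSkew) (x1 yn x y : ℕ)
    (h1 : D.HasCell (x1, y)) (h2 : D.HasCell (x, yn)) (hx : x1 ≤ x) (hy : y ≤ yn) :
    D.HasCell (x1, yn) := by
  simp only [hasCell_iff] at *
  obtain ⟨ha1, ha2, ha3⟩ := h1
  obtain ⟨hb1, hb2, hb3⟩ := h2
  have := addMono D.lam D.lam_strict x1 x ha1 hx (by omega)
  exact ⟨ha1, by omega, by omega⟩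

/-- The key geometric step: in the situation of a full rectangle with top cell
`(x1, yn)` and neck `(m', n')`, any two consecutive cells of a strict chain force the
second one strictly below and to the left of the rectangle. -/
lemma pairStep (D : ShiftedSkew) (a b a' b' x1 yn m' n' : ℕ)
    (hc : D.HasCell (a, b)) (hc' : D.HasCell (a', b'))
    (hab : a < a') (hba : b' < b)
    (hno1 : ¬ D.HasCell (a', b)) (hno2 : ¬ D.HasCell (a, b'))
    (hx1a : x1 ≤ a) (hbyn : b ≤ yn)
    (hcorn1 : D.HasCell (m', yn)) (hcorn2 : D.HasCell (x1, n'))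
    (hneck : D.HasCell (m', n')) :
    m' < a' ∧ b' < n' := by
  simp only [hasCell_iff] at hc hc' hno1 hno2 hcorn1 hcorn2 hneck
  obtain ⟨ha1, ha2, ha3⟩ := hc
  obtain ⟨ha1', ha2', ha3'⟩ := hc'
  have hb1 : a' + D.lam a' < b := by
    by_contra h
    exact hno1 ⟨ha1.trans hab.le, by omega, by omega⟩
  have hb2 : b' ≤ a + D.mu a := by
    by_contra h
    exact hno2 ⟨ha1, by omega, by omega⟩
  obtain ⟨hx11, hx12, hx13⟩ := hcorn2
  have hbn : b' < n' := by
    by_contra hge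
    rcases Nat.eq_zero_or_pos (D.mu a) with h | h
    · omega
    · have := addMono D.mu D.mu_strict x1 a hx11 hx1a h
      omega
  refine ⟨?_, hbn⟩
  by_contra h
  push_neg at h
  obtain ⟨hm1, hm2, hm3⟩ := hcorn1
  obtain ⟨-, hn2, hn3⟩ := hneck
  rcases le_or_gt n' b with hnb | hnb
  · exact hno1 ((hasCell_iff D a' b).mp (rectFull D x1 m' n' yn a' b
      ((hasCell_iff D m' yn).mpr ⟨hm1, hm2, hm3⟩) ((hasCell_iff D x1 n').mpr ⟨hx11, hx12, hx13⟩)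
      ((hasCell_iff D m' n').mpr ⟨hm1, hn2, hn3⟩) (hx1a.trans hab.le) h hnb hbyn))
  · have := addMono D.lam D.lam_strict a' m' ha1' h (by omega)
    omega

/-- In the pedestal situation (top cell present, neck absent) there is no
strict 2-chain. -/
lemma pedPair (D : ShiftedSkew) (a b a' b' x1 yn m' n' : ℕ)
    (hc : D.HasCell (a, b)) (hc' : D.HasCell (a', b'))
    (hab : a < a') (hba : b' < b)
    (hno1 : ¬ D.HasCell (a', b)) (hno2 : ¬ D.HasCell (a, b'))
    (hx1a : x1 ≤ a) (hbyn : b ≤ yn)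
    (hcorn1 : D.HasCell (m', yn)) (hcorn2 : D.HasCell (x1, n'))
    (hx1m : x1 ≤ m') (hn'yn : n' ≤ yn)
    (hneckno : ¬ D.HasCell (m', n')) : False := by
  simp only [hasCell_iff] at hc hc' hno1 hno2 hcorn1 hcorn2 hneckno
  obtain ⟨ha1, ha2, ha3⟩ := hc
  obtain ⟨ha1', ha2', ha3'⟩ := hc'
  obtain ⟨hm1, hm2, hm3⟩ := hcorn1
  obtain ⟨hx11, hx12, hx13⟩ := hcorn2
  have hb1 : a' + D.lam a' < b := by
    by_contra h
    exact hno1 ⟨ha1.trans hab.le, by omega, by omega⟩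
  have hb2 : b' ≤ a + D.mu a := by
    by_contra h
    exact hno2 ⟨ha1, by omega, by omega⟩
  -- the neck failure forces `n' ≤ m' + μ m'`
  have hneck2 : n' ≤ m' + D.mu m' := by
    by_contra h
    exact hneckno ⟨hx11.trans hx1m, by omega, by omega⟩
  -- μ m' must be 0
  have hmu0 : D.mu m' = 0 := by
    by_contra h
    have := addMono D.mu D.mu_strict x1 m' hx11 hx1m (by omega)
    omega
  -- μ a > 0, hence b' < n' ≤ m'
  have hmua : 0 < D.mu a := by omega
  have h1 := addMono D.mu D.mu_strict x1 a hx11 hx1a hmua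
  have ham : a' ≤ m' := by omega
  have := addMono D.lam D.lam_strict a' m' ha1' ham (by omega)
  omega

/-- Strict chains with respect to a predicate `P` on cells: rows strictly increase,
columns strictly decrease, every cell satisfies `P`, and neither "corner" of two
consecutive cells does. -/
def ChainP (P : ℕ × ℕ → Prop) : List (ℕ × ℕ) → Prop
  | [] => True
  | [c] => P c
  | c :: c' :: l => P c ∧ c.1 < c'.1 ∧ c'.2 < c.2 ∧ ¬P (c'.1, c.2) ∧ ¬P (c.1, c'.2) ∧
      ChainP P (c' :: l)

lemma chainP_head (P : ℕ × ℕ → Prop) (c : ℕ × ℕ) (l : List (ℕ × ℕ))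
    (h : ChainP P (c :: l)) : P c := by
  cases l with
  | nil => exact h
  | cons c' l => exact h.1

lemma chainP_tail (P : ℕ × ℕ → Prop) (c : ℕ × ℕ) (l : List (ℕ × ℕ))
    (h : ChainP P (c :: l)) : ChainP P l := by
  cases l with
  | nil => trivial
  | cons c' l => exact h.2.2.2.2.2

lemma chainP_congr (P P' : ℕ × ℕ → Prop) (A B : Finset ℕ)
    (hiff : ∀ x ∈ A, ∀ y ∈ B, (P (x, y) ↔ P' (x, y))) :
    ∀ l : List (ℕ × ℕ), (∀ c ∈ l, c.1 ∈ A ∧ c.2 ∈ B) → ChainP P l → ChainP P' l := by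
  intro l
  induction l with
  | nil => intro _ _; trivial
  | cons c l IH =>
    intro hmem h
    have hc := hmem c (by simp)
    cases l with
    | nil => exact (hiff c.1 hc.1 c.2 hc.2).mp h
    | cons c' l =>
      obtain ⟨h1, h2, h3, h4, h5, h6⟩ := h
      have hc' := hmem c' (by simp)
      refine ⟨(hiff c.1 hc.1 c.2 hc.2).mp h1, h2, h3,
        fun hP => h4 ((hiff c'.1 hc'.1 c.2 hc.2).mpr hP),
        fun hP => h5 ((hiff c.1 hc.1 c'.2 hc'.2).mpr hP),
        IH (fun e he => hmem e (by simp [he])) h6⟩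

lemma cntR_nil : cntR [] = 0 := rfl

lemma cntR_fullR (A B : Finset ℕ) (L : List Piece) :
    cntR (Piece.fullR A B :: L) = cntR L + 1 := by
  simp [cntR, List.countP_cons, cntP]

lemma cntR_ped (A B : Finset ℕ) (L : List Piece) :
    cntR (Piece.ped A B :: L) = cntR L + 1 := by
  simp [cntR, List.countP_cons, cntP]

lemma cntR_emptyR (A B : Finset ℕ) (L : List Piece) :
    cntR (Piece.emptyR A B :: L) = cntR L := by
  simp [cntR, List.countP_cons, cntP]

lemma decomp_fullR (cells : Finset (ℕ × ℕ)) (fuel : ℕ) (Xs Ys : Finset ℕ)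
    (x1 yn m' n' : ℕ)
    (hx1 : x1 = Xs.min.untopD 0) (hyn : yn = Ys.max.unbotD 0)
    (hm : m' = ((Xs.filter fun x => (x, yn) ∈ cells).max).unbotD 0)
    (hn : n' = ((Ys.filter fun y => (x1, y) ∈ cells).min).untopD 0)
    (hXY : ¬(Xs = ∅ ∧ Ys = ∅)) (htop : (x1, yn) ∈ cells) (hnk : (m', n') ∈ cells) :
    (decompAux cells (fuel + 1) Xs Ys).1 =
      Piece.fullR (Xs.filter (· ≤ m')) (Ys.filter (n' ≤ ·)) ::
        (decompAux cells fuel (Xs \ Xs.filter (· ≤ m')) (Ys \ Ys.filter (n' ≤ ·))).1 := by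
  subst hm; subst hn; subst hx1; subst hyn
  rw [decompAux_fst, if_neg hXY]
  dsimp only
  rw [if_pos htop, if_pos hnk]

lemma decomp_ped (cells : Finset (ℕ × ℕ)) (fuel : ℕ) (Xs Ys : Finset ℕ)
    (x1 yn m' n' : ℕ)
    (hx1 : x1 = Xs.min.untopD 0) (hyn : yn = Ys.max.unbotD 0)
    (hm : m' = ((Xs.filter fun x => (x, yn) ∈ cells).max).unbotD 0)
    (hn : n' = ((Ys.filter fun y => (x1, y) ∈ cells).min).untopD 0)
    (hXY : ¬(Xs = ∅ ∧ Ys = ∅)) (htop : (x1, yn) ∈ cells) (hnk : (m', n') ∉ cells) :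
    (decompAux cells (fuel + 1) Xs Ys).1 =
      [Piece.ped (Xs.filter (· ≤ m')) (Ys.filter (n' ≤ ·))] := by
  subst hm; subst hn; subst hx1; subst hyn
  rw [decompAux_fst, if_neg hXY]
  dsimp only
  rw [if_pos htop, if_neg hnk]

lemma decomp_empty (cells : Finset (ℕ × ℕ)) (fuel : ℕ) (Xs Ys : Finset ℕ)
    (x1 yn : ℕ)
    (hx1 : x1 = Xs.min.untopD 0) (hyn : yn = Ys.max.unbotD 0)
    (hXY : ¬(Xs = ∅ ∧ Ys = ∅)) (htop : (x1, yn) ∉ cells) :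
    (decompAux cells (fuel + 1) Xs Ys).1 =
      Piece.emptyR (Xs.filter fun x => ∀ x'' ∈ Xs, x'' ≤ x → ∀ y ∈ Ys, (x'', y) ∉ cells)
          (Ys.filter fun y => ∀ y'' ∈ Ys, y ≤ y'' → ∀ x ∈ Xs, (x, y'') ∉ cells) ::
        (decompAux cells fuel
          (Xs \ Xs.filter fun x => ∀ x'' ∈ Xs, x'' ≤ x → ∀ y ∈ Ys, (x'', y) ∉ cells)
          (Ys \ Ys.filter fun y => ∀ y'' ∈ Ys, y ≤ y'' → ∀ x ∈ Xs, (x, y'') ∉ cells)).1 := by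
  subst hx1; subst hyn
  rw [decompAux_fst, if_neg hXY]
  dsimp only
  rw [if_neg htop]

/-- **Lemma B**: the rectangular decomposition yields a strict chain whose length is
the rectangularity. -/
lemma exists_chain (cells : Finset (ℕ × ℕ)) (hcell : ∀ c ∈ cells, 1 ≤ c.1 ∧ 1 ≤ c.2) :
    ∀ fuel Xs Ys, ∃ l : List (ℕ × ℕ),
      ChainP (· ∈ cells) l ∧ l.length = cntR (decompAux cells fuel Xs Ys).1 ∧
      ∀ c ∈ l, c.1 ∈ Xs ∧ c.2 ∈ Ys := by
  intro fuel
  induction fuel with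
  | zero => intro Xs Ys; exact ⟨[], trivial, rfl, by simp⟩
  | succ fuel IH =>
    intro Xs Ys
    by_cases hXY : Xs = ∅ ∧ Ys = ∅
    · refine ⟨[], trivial, ?_, by simp⟩
      rw [decompAux_fst, if_pos hXY]; rfl
    set x1 := Xs.min.untopD 0 with hx1
    set yn := Ys.max.unbotD 0 with hyn
    by_cases htop : (x1, yn) ∈ cells
    · have hXne : Xs.Nonempty := by
        rcases Finset.eq_empty_or_nonempty Xs with h | h
        · exfalso
          have h1 : 1 ≤ x1 := (hcell _ htop).1
          have h0 : x1 = 0 := by rw [hx1, h]; rfl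
          omega
        · exact h
      have hYne : Ys.Nonempty := by
        rcases Finset.eq_empty_or_nonempty Ys with h | h
        · exfalso
          have h1 : 1 ≤ yn := (hcell _ htop).2
          have h0 : yn = 0 := by rw [hyn, h]; rfl
          omega
        · exact h
      have hx1mem : x1 ∈ Xs := by rw [hx1, untop'_min Xs hXne]; exact Finset.min'_mem _ _
      have hx1le : ∀ x ∈ Xs, x1 ≤ x := by
        intro x hx; rw [hx1, untop'_min Xs hXne]; exact Finset.min'_le _ _ hx
      have hynmem : yn ∈ Ys := by rw [hyn, unbot'_max Ys hYne]; exact Finset.max'_mem _ _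
      have hynle : ∀ y ∈ Ys, y ≤ yn := by
        intro y hy; rw [hyn, unbot'_max Ys hYne]; exact Finset.le_max' _ _ hy
      set m' := ((Xs.filter fun x => (x, yn) ∈ cells).max).unbotD 0 with hm'
      set n' := ((Ys.filter fun y => (x1, y) ∈ cells).min).untopD 0 with hn'
      have hF1ne : (Xs.filter fun x => (x, yn) ∈ cells).Nonempty :=
        ⟨x1, Finset.mem_filter.mpr ⟨hx1mem, htop⟩⟩
      have hF2ne : (Ys.filter fun y => (x1, y) ∈ cells).Nonempty :=
        ⟨yn, Finset.mem_filter.mpr ⟨hynmem, htop⟩⟩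
      have hm'mem : m' ∈ Xs.filter fun x => (x, yn) ∈ cells := by
        rw [hm', unbot'_max _ hF1ne]; exact Finset.max'_mem _ _
      have hm'le : ∀ x ∈ Xs, (x, yn) ∈ cells → x ≤ m' := by
        intro x hx hc; rw [hm', unbot'_max _ hF1ne]
        exact Finset.le_max' _ _ (Finset.mem_filter.mpr ⟨hx, hc⟩)
      have hn'mem : n' ∈ Ys.filter fun y => (x1, y) ∈ cells := by
        rw [hn', untop'_min _ hF2ne]; exact Finset.min'_mem _ _
      have hn'le : ∀ y ∈ Ys, (x1, y) ∈ cells → n' ≤ y := by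
        intro y hy hc; rw [hn', untop'_min _ hF2ne]
        exact Finset.min'_le _ _ (Finset.mem_filter.mpr ⟨hy, hc⟩)
      have hx1m' : x1 ≤ m' := hm'le x1 hx1mem htop
      have hn'yn : n' ≤ yn := hn'le yn hynmem htop
      by_cases hnk : (m', n') ∈ cells
      · obtain ⟨l, hch, hlen, hmem⟩ := IH (Xs \ Xs.filter (· ≤ m')) (Ys \ Ys.filter (n' ≤ ·))
        refine ⟨(x1, yn) :: l, ?_, ?_, ?_⟩
        · cases l with
          | nil => exact htop
          | cons c l' =>
            have hc := hmem c (by simp)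
            have hcX : c.1 ∈ Xs ∧ m' < c.1 := by
              have h := hc.1
              rw [Finset.mem_sdiff, Finset.mem_filter] at h
              refine ⟨h.1, ?_⟩
              by_contra hh
              exact h.2 ⟨h.1, by omega⟩
            have hcY : c.2 ∈ Ys ∧ c.2 < n' := by
              have h := hc.2
              rw [Finset.mem_sdiff, Finset.mem_filter] at h
              refine ⟨h.1, ?_⟩
              by_contra hh
              exact h.2 ⟨h.1, by omega⟩
            refine ⟨htop, by omega, by omega, ?_, ?_, hch⟩
            · intro hmem2
              have := hm'le c.1 hcX.1 hmem2
              omega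
            · intro hmem2
              have := hn'le c.2 hcY.1 hmem2
              omega
        · rw [decomp_fullR cells fuel Xs Ys x1 yn m' n' hx1 hyn hm' hn' hXY htop hnk,
            cntR_fullR]
          simp [hlen]
        · intro c hc
          rcases List.mem_cons.mp hc with h | h
          · subst h; exact ⟨hx1mem, hynmem⟩
          · obtain ⟨h1, h2⟩ := hmem c h
            exact ⟨(Finset.mem_sdiff.mp h1).1, (Finset.mem_sdiff.mp h2).1⟩
      · refine ⟨[(x1, yn)], htop, ?_, ?_⟩
        · rw [decomp_ped cells fuel Xs Ys x1 yn m' n' hx1 hyn hm' hn' hXY htop hnk]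
          rfl
        · intro c hc
          simp only [List.mem_singleton] at hc
          subst hc; exact ⟨hx1mem, hynmem⟩
    · obtain ⟨l, hch, hlen, hmem⟩ :=
        IH (Xs \ Xs.filter fun x => ∀ x'' ∈ Xs, x'' ≤ x → ∀ y ∈ Ys, (x'', y) ∉ cells)
           (Ys \ Ys.filter fun y => ∀ y'' ∈ Ys, y ≤ y'' → ∀ x ∈ Xs, (x, y'') ∉ cells)
      refine ⟨l, hch, ?_, ?_⟩
      · rw [decomp_empty cells fuel Xs Ys x1 yn hx1 hyn hXY htop, cntR_emptyR]
        exact hlen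
      · intro c hc
        obtain ⟨h1, h2⟩ := hmem c hc
        exact ⟨(Finset.mem_sdiff.mp h1).1, (Finset.mem_sdiff.mp h2).1⟩

lemma chainP_all (P : ℕ × ℕ → Prop) :
    ∀ l : List (ℕ × ℕ), ChainP P l → ∀ c ∈ l, P c := by
  intro l
  induction l with
  | nil => intro _ c hc; simp at hc
  | cons c0 l IH =>
    intro h c hc
    rcases List.mem_cons.mp hc with rfl | hc'
    · exact chainP_head _ _ _ h
    · exact IH (chainP_tail _ _ _ h) c hc'

/-- **Lemma A**: any strict chain is at most as long as the rectangularity. -/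
lemma chain_le (D : ShiftedSkew) (cells : Finset (ℕ × ℕ))
    (hcells : ∀ c ∈ cells, D.HasCell c) :
    ∀ fuel Xs Ys (l : List (ℕ × ℕ)), (∀ x ∈ Xs, 1 ≤ x) →
      (∀ x ∈ Xs, ∀ y ∈ Ys, D.HasCell (x, y) → (x, y) ∈ cells) →
      ChainP D.HasCell l → (∀ c ∈ l, c.1 ∈ Xs ∧ c.2 ∈ Ys) →
      Xs.card + Ys.card < fuel →
      l.length ≤ cntR (decompAux cells fuel Xs Ys).1 := by
  intro fuel
  induction fuel with
  | zero => intro Xs Ys l _ _ _ _ h; omega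
  | succ fuel IH =>
    intro Xs Ys l hX hclosed hch hmem hcard
    cases l with
    | nil => simp
    | cons c0 L =>
      have hc0 := hmem c0 (by simp)
      have hXne : Xs.Nonempty := ⟨c0.1, hc0.1⟩
      have hYne : Ys.Nonempty := ⟨c0.2, hc0.2⟩
      have hXY : ¬(Xs = ∅ ∧ Ys = ∅) := by
        intro h; rw [h.1] at hXne; exact Finset.not_nonempty_empty hXne
      set x1 := Xs.min.untopD 0 with hx1
      set yn := Ys.max.unbotD 0 with hyn
      have hx1mem : x1 ∈ Xs := by rw [hx1, untop'_min Xs hXne]; exact Finset.min'_mem _ _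
      have hx1le : ∀ x ∈ Xs, x1 ≤ x := by
        intro x hx; rw [hx1, untop'_min Xs hXne]; exact Finset.min'_le _ _ hx
      have hynmem : yn ∈ Ys := by rw [hyn, unbot'_max Ys hYne]; exact Finset.max'_mem _ _
      have hynle : ∀ y ∈ Ys, y ≤ yn := by
        intro y hy; rw [hyn, unbot'_max Ys hYne]; exact Finset.le_max' _ _ hy
      by_cases htop : (x1, yn) ∈ cells
      · set m' := ((Xs.filter fun x => (x, yn) ∈ cells).max).unbotD 0 with hm'
        set n' := ((Ys.filter fun y => (x1, y) ∈ cells).min).untopD 0 with hn'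
        have hF1ne : (Xs.filter fun x => (x, yn) ∈ cells).Nonempty :=
          ⟨x1, Finset.mem_filter.mpr ⟨hx1mem, htop⟩⟩
        have hF2ne : (Ys.filter fun y => (x1, y) ∈ cells).Nonempty :=
          ⟨yn, Finset.mem_filter.mpr ⟨hynmem, htop⟩⟩
        have hm'mem : m' ∈ Xs.filter fun x => (x, yn) ∈ cells := by
          rw [hm', unbot'_max _ hF1ne]; exact Finset.max'_mem _ _
        have hm'le : ∀ x ∈ Xs, (x, yn) ∈ cells → x ≤ m' := by
          intro x hx hc; rw [hm', unbot'_max _ hF1ne]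
          exact Finset.le_max' _ _ (Finset.mem_filter.mpr ⟨hx, hc⟩)
        have hn'mem : n' ∈ Ys.filter fun y => (x1, y) ∈ cells := by
          rw [hn', untop'_min _ hF2ne]; exact Finset.min'_mem _ _
        have hn'le : ∀ y ∈ Ys, (x1, y) ∈ cells → n' ≤ y := by
          intro y hy hc; rw [hn', untop'_min _ hF2ne]
          exact Finset.min'_le _ _ (Finset.mem_filter.mpr ⟨hy, hc⟩)
        have hx1m' : x1 ≤ m' := hm'le x1 hx1mem htop
        have hn'yn : n' ≤ yn := hn'le yn hynmem htop
        have hm'X : m' ∈ Xs := (Finset.mem_filter.mp hm'mem).1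
        have hn'Y : n' ∈ Ys := (Finset.mem_filter.mp hn'mem).1
        have hcorn1 : D.HasCell (m', yn) := hcells _ (Finset.mem_filter.mp hm'mem).2
        have hcorn2 : D.HasCell (x1, n') := hcells _ (Finset.mem_filter.mp hn'mem).2
        by_cases hnk : (m', n') ∈ cells
        · have hneck : D.HasCell (m', n') := hcells _ hnk
          have key : ∀ (c : ℕ × ℕ) (L' : List (ℕ × ℕ)), ChainP D.HasCell (c :: L') →
              (∀ e ∈ c :: L', e.1 ∈ Xs ∧ e.2 ∈ Ys) →
              ∀ e ∈ L', m' < e.1 ∧ e.2 < n' := by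
            intro c L'
            induction L' generalizing c with
            | nil => intro _ _ e he; simp at he
            | cons c' L'' IH2 =>
              intro hch2 hmem2 e he
              obtain ⟨h1, h2, h3, h4, h5, h6⟩ := hch2
              rcases List.mem_cons.mp he with rfl | he'
              · have hcm := hmem2 c (by simp)
                exact pairStep D c.1 c.2 e.1 e.2 x1 yn m' n' h1
                  (chainP_head _ _ _ h6) h2 h3 h4 h5
                  (hx1le _ hcm.1) (hynle _ hcm.2) hcorn1 hcorn2 hneck
              · exact IH2 c' h6 (fun e' he'' => hmem2 e' (by simp [he''])) e he'
          have hLmem : ∀ e ∈ L,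
              e.1 ∈ Xs \ Xs.filter (· ≤ m') ∧ e.2 ∈ Ys \ Ys.filter (n' ≤ ·) := by
            intro e he
            have hk := key c0 L hch hmem e he
            have hm := hmem e (by simp [he])
            constructor
            · rw [Finset.mem_sdiff, Finset.mem_filter]
              exact ⟨hm.1, fun hq => by omega⟩
            · rw [Finset.mem_sdiff, Finset.mem_filter]
              exact ⟨hm.2, fun hq => by omega⟩
          have hcard1 : (Xs \ Xs.filter (· ≤ m')).card < Xs.card := by
            refine Finset.card_lt_card ?_
            refine (Finset.ssubset_iff_of_subset Finset.sdiff_subset).mpr ⟨x1, hx1mem, ?_⟩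
            rw [Finset.mem_sdiff]
            push_neg
            intro _
            exact Finset.mem_filter.mpr ⟨hx1mem, hx1m'⟩
          have hcard2 : (Ys \ Ys.filter (n' ≤ ·)).card < Ys.card := by
            refine Finset.card_lt_card ?_
            refine (Finset.ssubset_iff_of_subset Finset.sdiff_subset).mpr ⟨yn, hynmem, ?_⟩
            rw [Finset.mem_sdiff]
            push_neg
            intro _
            exact Finset.mem_filter.mpr ⟨hynmem, hn'yn⟩
          have hrec := IH (Xs \ Xs.filter (· ≤ m')) (Ys \ Ys.filter (n' ≤ ·)) L
            (fun x hx => hX x (Finset.mem_sdiff.mp hx).1)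
            (fun x hx y hy hc =>
              hclosed x (Finset.mem_sdiff.mp hx).1 y (Finset.mem_sdiff.mp hy).1 hc)
            (chainP_tail _ _ _ hch) hLmem (by omega)
          rw [decomp_fullR cells fuel Xs Ys x1 yn m' n' hx1 hyn hm' hn' hXY htop hnk,
            cntR_fullR]
          simpa using Nat.add_le_add_right hrec 1
        · have hneckno : ¬ D.HasCell (m', n') := fun h => hnk (hclosed m' hm'X n' hn'Y h)
          have hL : L = [] := by
            cases L with
            | nil => rfl
            | cons c1 L' =>
              exfalso
              obtain ⟨h1, h2, h3, h4, h5, h6⟩ := hch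
              exact pedPair D c0.1 c0.2 c1.1 c1.2 x1 yn m' n' h1
                (chainP_head _ _ _ h6) h2 h3 h4 h5
                (hx1le _ hc0.1) (hynle _ hc0.2) hcorn1 hcorn2 hx1m' hn'yn hneckno
          subst hL
          rw [decomp_ped cells fuel Xs Ys x1 yn m' n' hx1 hyn hm' hn' hXY htop hnk]
          simp [cntR_ped, cntR_nil]
      · have hall : ∀ e ∈ c0 :: L,
            e.1 ∈ Xs \ (Xs.filter fun x => ∀ x'' ∈ Xs, x'' ≤ x → ∀ y ∈ Ys, (x'', y) ∉ cells) ∧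
            e.2 ∈ Ys \ (Ys.filter fun y => ∀ y'' ∈ Ys, y ≤ y'' → ∀ x ∈ Xs, (x, y'') ∉ cells) := by
          intro e he
          have hm := hmem e he
          have hecell : e ∈ cells :=
            hclosed e.1 hm.1 e.2 hm.2 (chainP_all _ _ hch e he)
          constructor
          · rw [Finset.mem_sdiff, Finset.mem_filter]
            push_neg
            exact ⟨hm.1, fun _ => ⟨e.1, hm.1, le_rfl, e.2, hm.2, hecell⟩⟩
          · rw [Finset.mem_sdiff, Finset.mem_filter]
            push_neg
            exact ⟨hm.2, fun _ => ⟨e.2, hm.2, le_rfl, e.1, hm.1, hecell⟩⟩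
        have hprog : (x1 ∈ Xs.filter fun x => ∀ x'' ∈ Xs, x'' ≤ x → ∀ y ∈ Ys, (x'', y) ∉ cells) ∨
            (yn ∈ Ys.filter fun y => ∀ y'' ∈ Ys, y ≤ y'' → ∀ x ∈ Xs, (x, y'') ∉ cells) := by
          by_contra h
          push_neg at h
          obtain ⟨h1, h2⟩ := h
          rw [Finset.mem_filter] at h1 h2
          push_neg at h1 h2
          obtain ⟨x0, hx0, hx0le, y0, hy0, hy0c⟩ := h1 hx1mem
          obtain ⟨y1, hy1, hy1le, x2, hx2, hx2c⟩ := h2 hynmem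
          have hx0eq : x0 = x1 := le_antisymm hx0le (hx1le x0 hx0)
          have hy1eq : y1 = yn := le_antisymm (hynle y1 hy1) hy1le
          rw [hx0eq] at hy0c
          rw [hy1eq] at hx2c
          have := topCell D x1 yn x2 y0 (hcells _ hy0c) (hcells _ hx2c)
            (hx1le x2 hx2) (hynle y0 hy0)
          exact htop (hclosed x1 hx1mem yn hynmem this)
        have hcard' : (Xs \ (Xs.filter fun x => ∀ x'' ∈ Xs, x'' ≤ x → ∀ y ∈ Ys, (x'', y) ∉ cells)).card +
            (Ys \ (Ys.filter fun y => ∀ y'' ∈ Ys, y ≤ y'' → ∀ x ∈ Xs, (x, y'') ∉ cells)).card < fuel := by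
          have hb1 : (Xs \ (Xs.filter fun x => ∀ x'' ∈ Xs, x'' ≤ x → ∀ y ∈ Ys, (x'', y) ∉ cells)).card ≤ Xs.card :=
            Finset.card_le_card Finset.sdiff_subset
          have hb2 : (Ys \ (Ys.filter fun y => ∀ y'' ∈ Ys, y ≤ y'' → ∀ x ∈ Xs, (x, y'') ∉ cells)).card ≤ Ys.card :=
            Finset.card_le_card Finset.sdiff_subset
          rcases hprog with hp | hp
          · have : (Xs \ (Xs.filter fun x => ∀ x'' ∈ Xs, x'' ≤ x → ∀ y ∈ Ys, (x'', y) ∉ cells)).card < Xs.card := by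
              refine Finset.card_lt_card ?_
              refine (Finset.ssubset_iff_of_subset Finset.sdiff_subset).mpr ⟨x1, hx1mem, ?_⟩
              rw [Finset.mem_sdiff]
              push_neg
              intro _
              exact hp
            omega
          · have : (Ys \ (Ys.filter fun y => ∀ y'' ∈ Ys, y ≤ y'' → ∀ x ∈ Xs, (x, y'') ∉ cells)).card < Ys.card := by
              refine Finset.card_lt_card ?_
              refine (Finset.ssubset_iff_of_subset Finset.sdiff_subset).mpr ⟨yn, hynmem, ?_⟩
              rw [Finset.mem_sdiff]
              push_neg
              intro _
              exact hp
            omega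
        have hrec := IH _ _ (c0 :: L)
          (fun x hx => hX x (Finset.mem_sdiff.mp hx).1)
          (fun x hx y hy hc =>
            hclosed x (Finset.mem_sdiff.mp hx).1 y (Finset.mem_sdiff.mp hy).1 hc)
          hch hall hcard'
        rw [decomp_empty cells fuel Xs Ys x1 yn hx1 hyn hXY htop, cntR_emptyR]
        exact hrec
/-- **Statement 10.**  For any nonempty diagram of the form `D_{XY}` arising from a
shifted skew diagram `D`, and any subsets `X' ⊆ X` and `Y' ⊆ Y`, one has
`rect(D_{X'Y'}) ≤ rect(D_{XY})`. -/
theorem rect_monotone (D : ShiftedSkew) (Xs Ys Xs' Ys' : Finset ℕ)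
    (hX : ∀ x ∈ Xs, 1 ≤ x) (hY : ∀ y ∈ Ys, 1 ≤ y)
    (hne : (restrictD D Xs Ys).Nonempty) (hX' : Xs' ⊆ Xs) (hY' : Ys' ⊆ Ys) :
    rectNum (restrictD D Xs' Ys') Xs' Ys' ≤ rectNum (restrictD D Xs Ys) Xs Ys := by
  classical
  set cs := restrictD D Xs' Ys' with hcs
  set cb := restrictD D Xs Ys with hcb
  have hcsmem : ∀ c ∈ cs, D.HasCell c ∧ c.1 ∈ Xs' ∧ c.2 ∈ Ys' := by
    intro c hc
    rw [hcs, restrictD, Finset.mem_filter, Finset.mem_product] at hc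
    exact ⟨hc.2, hc.1.1, hc.1.2⟩
  have hcell : ∀ c ∈ cs, 1 ≤ c.1 ∧ 1 ≤ c.2 := by
    intro c hc
    obtain ⟨⟨h1, h2, h3⟩, -, -⟩ := hcsmem c hc
    omega
  obtain ⟨l, hch, hlen, hmem⟩ := exists_chain cs hcell (Xs'.card + Ys'.card + 1) Xs' Ys'
  have hchD : ChainP D.HasCell l := by
    refine chainP_congr (· ∈ cs) D.HasCell Xs' Ys' ?_ l hmem hch
    intro x hx y hy
    simp only [hcs, restrictD, Finset.mem_filter, Finset.mem_product]
    tauto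
  have h1 := chain_le D cb
    (fun c hc => (Finset.mem_filter.mp hc).2)
    (Xs.card + Ys.card + 1) Xs Ys l hX
    (fun x hx y hy hc => Finset.mem_filter.mpr ⟨Finset.mem_product.mpr ⟨hx, hy⟩, hc⟩)
    hchD (fun c hc => ⟨hX' (hmem c hc).1, hY' (hmem c hc).2⟩) (by omega)
  rw [rectNum_eq, rectNum_eq]
  unfold pieces
  rw [← hlen]
  exact h1

end SkewDiag
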